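/- Let G be 2-connected with a C-witness structure W for an optimal cycle C, and let u, v ∈ V(G) with d_G(u) = d_G(v) = 2 such that G − {u, v} has exactly two connected components G_1 and G_2. If u and v belong to the same big witness set W ∈ W, then W contains all vertices of G_1 or all vertices of G_2. -/

import Mathlib

open SimpleGraph

/-- Contraction of the edge `uv` in `G`: remove `v`, attaching its former
neighbours to `u`. -/
def SimpleGraph.contractEdge {V : Type} (G : SimpleGraph V) (u v : V) :
    SimpleGraph {x : V // x ≠ v} :=
  SimpleGraph.fromRel (fun a b =>
    G.Adj a.1 b.1 ∨ (a.1 = u ∧ G.Adj v b.1) ∨ (b.1 = u ∧ G.Adj v a.1))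

/-- `ContractsIn G H n` : `H` is obtained from `G` by exactly `n` edge contractions. -/
inductive ContractsIn : {V : Type} → SimpleGraph V → {W : Type} → SimpleGraph W → ℕ → Prop
  | iso {V : Type} {G : SimpleGraph V} {W : Type} {H : SimpleGraph W} :
      Nonempty (G ≃g H) → ContractsIn G H 0
  | step {V : Type} {G : SimpleGraph V} (u v : V) (huv : G.Adj u v)
      {W : Type} {H : SimpleGraph W} {n : ℕ} :
      ContractsIn (G.contractEdge u v) H n → ContractsIn G H (n + 1)

/-- `G` is contractible to `H`. -/
def ContractibleTo {V W : Type} (G : SimpleGraph V) (H : SimpleGraph W) : Prop :=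
  ∃ n, ContractsIn G H n

/-- `G` is `k`-contractible to `H` : `H` arises from `G` by at most `k` edge contractions. -/
def KContractible {V W : Type} (G : SimpleGraph V) (H : SimpleGraph W) (k : ℕ) : Prop :=
  ∃ n ≤ k, ContractsIn G H n

/-- An `H`-witness structure of `G`. -/
structure IsWitnessStructure {V W : Type} (G : SimpleGraph V) (H : SimpleGraph W)
    (Wit : W → Set V) : Prop where
  connected : ∀ h, (G.induce (Wit h)).Connected
  adj : ∀ h₁ h₂ : W, h₁ ≠ h₂ →
    (H.Adj h₁ h₂ ↔ ∃ a ∈ Wit h₁, ∃ b ∈ Wit h₂, G.Adj a b)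
  cover : ∀ v : V, ∃ h, v ∈ Wit h
  disjoint : ∀ h₁ h₂ : W, h₁ ≠ h₂ → Disjoint (Wit h₁) (Wit h₂)

/-- `P` is a path graph. -/
def IsPathGraph {W : Type} (P : SimpleGraph W) : Prop :=
  ∃ n, Nonempty (P ≃g SimpleGraph.pathGraph n)

/-- `C` is a cycle graph (on at least 3 vertices). -/
def IsCycleGraph {W : Type} (C : SimpleGraph W) : Prop :=
  ∃ n, 3 ≤ n ∧ Nonempty (C ≃g SimpleGraph.cycleGraph n)

/-- `G` is 2-edge-connected. -/
def TwoEdgeConnected {V : Type} (G : SimpleGraph V) : Prop :=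
  G.Connected ∧ ∀ e ∈ G.edgeSet, (G.deleteEdges {e}).Connected

/-- `G` is 2-connected. -/
def TwoConnected {V : Type} (G : SimpleGraph V) : Prop :=
  G.Connected ∧ 3 ≤ Nat.card V ∧ ∀ v : V, (G.induce {u | u ≠ v}).Connected

/-- `C₁` and `C₂` are (exactly the) two connected components of `G - {x, y}`. -/
def TwoComponents {V : Type} (G : SimpleGraph V) (x y : V) (C₁ C₂ : Set V) : Prop :=
  Disjoint C₁ C₂ ∧ C₁ ∪ C₂ = {v | v ≠ x ∧ v ≠ y} ∧
  C₁.Nonempty ∧ C₂.Nonempty ∧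
  (G.induce C₁).Connected ∧ (G.induce C₂).Connected ∧
  ∀ a ∈ C₁, ∀ b ∈ C₂, ¬ G.Adj a b

/-- `C` is an optimal (longest) cycle to which `G` can be contracted. -/
def OptimalCycle {V W : Type} (G : SimpleGraph V) (C : SimpleGraph W) : Prop :=
  IsCycleGraph C ∧ ContractibleTo G C ∧
  ∀ (W' : Type) (C' : SimpleGraph W'), IsCycleGraph C' → ContractibleTo G C' →
    Nat.card W' ≤ Nat.card W

/-- `G` can be contracted to a path, with `a` in one endpoint witness set and `b` in
the other, using at most `k` edge contractions. -/
def PathContractFixed {V : Type} (G : SimpleGraph V) (a b : V) (k : ℕ) : Prop :=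
  ∃ (n : ℕ) (Wit : Fin (n + 1) → Set V),
    IsWitnessStructure G (SimpleGraph.pathGraph (n + 1)) Wit ∧
    Nat.card V ≤ (n + 1) + k ∧
    ((a ∈ Wit 0 ∧ b ∈ Wit (Fin.last n)) ∨ (a ∈ Wit (Fin.last n) ∧ b ∈ Wit 0))

section Aux

open Fin.NatCast Fin.CommRing

lemma pred_of_reachable {α : Type*} {H : SimpleGraph α} {p : α → Prop}
    (hp : ∀ a b : α, H.Adj a b → (p a ↔ p b)) {a b : α} (h : H.Reachable a b) :
    p a ↔ p b := by
  obtain ⟨w⟩ := h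
  induction w with
  | nil => rfl
  | cons hadj _ ih => exact (hp _ _ hadj).trans ih

lemma fin_cast_ne_zero {n s : ℕ} (h1 : 1 ≤ s) (h2 : s ≤ n + 2) :
    (s : Fin (n + 3)) ≠ 0 := by
  intro h
  rw [Fin.natCast_eq_zero] at h
  have := Nat.le_of_dvd (by omega) h
  omega

lemma reachable_congr_right {α : Type*} {H : SimpleGraph α} {a b c : α}
    (h : H.Reachable a b) (e : b = c) : H.Reachable a c := e ▸ h

lemma cycle_del_reach {n : ℕ} (i j k : Fin (n + 3)) (hj : j ≠ i) (hk : k ≠ i) :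
    ((SimpleGraph.cycleGraph (n + 3)).induce {x | x ≠ i}).Reachable
      ⟨j, hj⟩ ⟨k, hk⟩ := by
  have hadd_ne : ∀ s : ℕ, 1 ≤ s → s ≤ n + 2 → i + (s : Fin (n + 3)) ≠ i := by
    intro s h1 h2 hcon
    exact fin_cast_ne_zero h1 h2 (by
      have : i + (s : Fin (n + 3)) = i + 0 := by rw [hcon, add_zero]
      exact add_left_cancel this)
  have hbase : i + ((1 : ℕ) : Fin (n + 3)) ≠ i := hadd_ne 1 le_rfl (by omega)
  have key : ∀ (t : ℕ) (h1 : 1 ≤ t) (h2 : t ≤ n + 2),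
      ((SimpleGraph.cycleGraph (n + 3)).induce {x | x ≠ i}).Reachable
        ⟨i + ((1 : ℕ) : Fin (n + 3)), hbase⟩
        ⟨i + (t : Fin (n + 3)), hadd_ne t h1 h2⟩ := by
    intro t h1 h2
    induction t with
    | zero => omega
    | succ s ih =>
      rcases Nat.eq_or_lt_of_le h1 with h1' | h1'
      · refine reachable_congr_right (SimpleGraph.Reachable.refl _) (Subtype.ext ?_)
        show i + ((1 : ℕ) : Fin (n + 3)) = i + ((s + 1 : ℕ) : Fin (n + 3))
        rw [← h1']
      · have hs1 : 1 ≤ s := by omega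
        have hs2 : s ≤ n + 2 := by omega
        refine (ih hs1 hs2).trans (SimpleGraph.Adj.reachable ?_)
        show (SimpleGraph.cycleGraph (n + 3)).Adj
          (i + (s : Fin (n + 3))) (i + ((s + 1 : ℕ) : Fin (n + 3)))
        rw [SimpleGraph.cycleGraph_adj]
        right
        push_cast
        ring
  have reach_of : ∀ (m : Fin (n + 3)) (hm : m ≠ i),
      ((SimpleGraph.cycleGraph (n + 3)).induce {x | x ≠ i}).Reachable
        ⟨i + ((1 : ℕ) : Fin (n + 3)), hbase⟩ ⟨m, hm⟩ := by
    intro m hm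
    have hne : (m - i) ≠ 0 := sub_ne_zero.mpr hm
    have hval1 : 1 ≤ (m - i).val := by
      rcases Nat.eq_zero_or_pos (m - i).val with h0 | h0
      · exact absurd (Fin.ext (by simpa using h0) : m - i = 0) hne
      · omega
    have hval2 : (m - i).val ≤ n + 2 := by
      have := (m - i).isLt; omega
    refine reachable_congr_right (key (m - i).val hval1 hval2) (Subtype.ext ?_)
    show i + (((m - i).val : ℕ) : Fin (n + 3)) = m
    rw [Fin.cast_val_eq_self]; ring
  exact (reach_of j hj).symm.trans (reach_of k hk)

end Aux
/-- With `G` 2-connected and a `C`-witness structure for an optimal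
cycle `C`, if degree-2 vertices `u`, `v` with `G − {u, v}` having exactly two
components `C₁`, `C₂` lie in the same big witness set, then that witness set contains
all of `C₁` or all of `C₂`. -/
theorem stmt10 {V W : Type} [Finite V] (G : SimpleGraph V) (C : SimpleGraph W)
    (h2 : TwoConnected G) (hopt : OptimalCycle G C)
    (Wit : W → Set V) (hW : IsWitnessStructure G C Wit)
    (u v : V) (hdu : Nat.card (G.neighborSet u) = 2)
    (hdv : Nat.card (G.neighborSet v) = 2)
    (C₁ C₂ : Set V) (hcomp : TwoComponents G u v C₁ C₂)
    (h : W) (hu : u ∈ Wit h) (hv : v ∈ Wit h) (hbig : 2 ≤ Nat.card (Wit h)) :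
    C₁ ⊆ Wit h ∨ C₂ ⊆ Wit h := by
  obtain ⟨hdisj, hunion, hne1, hne2, hconn1, hconn2, hnoadj⟩ := hcomp
  -- every witness set other than h lies entirely in C₁ or C₂
  have hsub : ∀ w : W, w ≠ h → Wit w ⊆ C₁ ∪ C₂ := by
    intro w hw x hx
    have hdisjW := hW.disjoint w h hw
    have hxu : x ≠ u := fun he => (Set.disjoint_left.mp hdisjW hx) (he ▸ hu)
    have hxv : x ≠ v := fun he => (Set.disjoint_left.mp hdisjW hx) (he ▸ hv)
    rw [hunion]
    exact ⟨hxu, hxv⟩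
  have hside : ∀ w : W, w ≠ h → (Wit w ⊆ C₁ ∨ Wit w ⊆ C₂) := by
    intro w hw
    have hc := hW.connected w
    obtain ⟨a⟩ := hc.nonempty
    have hpres : ∀ x y : (Wit w : Set V), (G.induce (Wit w)).Adj x y →
        ((x : V) ∈ C₁ ↔ (y : V) ∈ C₁) := by
      intro x y hxy
      have hadj : G.Adj (x : V) (y : V) := hxy
      have hxm := hsub w hw x.2
      have hym := hsub w hw y.2
      constructor
      · intro hx1
        rcases hym with hy1 | hy2
        · exact hy1
        · exact absurd hadj (hnoadj _ hx1 _ hy2)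
      · intro hy1
        rcases hxm with hx1 | hx2
        · exact hx1
        · exact absurd hadj.symm (hnoadj _ hy1 _ hx2)
    by_cases ha : (a : V) ∈ C₁
    · left
      intro x hx
      have := pred_of_reachable hpres (hc.preconnected a ⟨x, hx⟩)
      exact this.mp ha
    · right
      intro x hx
      have := pred_of_reachable hpres (hc.preconnected a ⟨x, hx⟩)
      have hx1 : (x : V) ∉ C₁ := fun hc1 => ha (this.mpr hc1)
      rcases hsub w hw hx with h1 | h2
      · exact absurd h1 hx1
      · exact h2
  -- adjacent non-h witness sets lie on the same side
  by_contra hcon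
  push_neg at hcon
  obtain ⟨hnot1, hnot2⟩ := hcon
  rw [Set.not_subset] at hnot1 hnot2
  obtain ⟨x₁, hx₁C, hx₁W⟩ := hnot1
  obtain ⟨x₂, hx₂C, hx₂W⟩ := hnot2
  obtain ⟨w₁, hw₁⟩ := hW.cover x₁
  obtain ⟨w₂, hw₂⟩ := hW.cover x₂
  have hw₁h : w₁ ≠ h := fun he => hx₁W (he ▸ hw₁)
  have hw₂h : w₂ ≠ h := fun he => hx₂W (he ▸ hw₂)
  have hW₁ : Wit w₁ ⊆ C₁ := by
    rcases hside w₁ hw₁h with h1 | h2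
    · exact h1
    · exact absurd (h2 hw₁) (Set.disjoint_left.mp hdisj hx₁C)
  have hW₂ : Wit w₂ ⊆ C₂ := by
    rcases hside w₂ hw₂h with h1 | h2
    · exact absurd hx₂C (Set.disjoint_left.mp hdisj (h1 hw₂))
    · exact h2
  -- obtain the cycle iso
  obtain ⟨⟨m, hm3, ⟨e⟩⟩, _, _⟩ := hopt
  obtain ⟨n, rfl⟩ : ∃ k, m = k + 3 := ⟨m - 3, by omega⟩
  -- reachability in C minus h
  have hreach_cyc := cycle_del_reach (e h) (e w₁) (e w₂)
    (fun he => hw₁h (e.injective he)) (fun he => hw₂h (e.injective he))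
  -- transfer it to C via a graph homomorphism
  let f : ((SimpleGraph.cycleGraph (n + 3)).induce {x | x ≠ e h}) →g
      (C.induce {w | w ≠ h}) :=
    { toFun := fun x => ⟨e.symm x.1, fun hc => x.2 (by simpa using congrArg e hc)⟩
      map_rel' := by
        intro a b hab
        exact e.symm.map_adj_iff.mpr hab }
  have hreach : (C.induce {w | w ≠ h}).Reachable ⟨w₁, hw₁h⟩ ⟨w₂, hw₂h⟩ := by
    have := hreach_cyc.map f
    have h1 : f ⟨e w₁, fun he => hw₁h (e.injective he)⟩ = ⟨w₁, hw₁h⟩ :=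
      Subtype.ext (e.symm_apply_apply w₁)
    have h2 : f ⟨e w₂, fun he => hw₂h (e.injective he)⟩ = ⟨w₂, hw₂h⟩ :=
      Subtype.ext (e.symm_apply_apply w₂)
    rwa [h1, h2] at this
  -- the predicate "Wit ⊆ C₁" is preserved along this reachability
  have hpres : ∀ a b : ({w | w ≠ h} : Set W), (C.induce {w | w ≠ h}).Adj a b →
      ((Wit (a : W) ⊆ C₁) ↔ (Wit (b : W) ⊆ C₁)) := by
    intro a b hab
    have hCadj : C.Adj (a : W) (b : W) := hab
    have hne : (a : W) ≠ (b : W) := hCadj.ne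
    obtain ⟨p, hp, q, hq, hpq⟩ := (hW.adj _ _ hne).mp hCadj
    constructor
    · intro ha1
      rcases hside b b.2 with h1 | h2
      · exact h1
      · exact absurd hpq (hnoadj _ (ha1 hp) _ (h2 hq))
    · intro hb1
      rcases hside a a.2 with h1 | h2
      · exact h1
      · exact absurd hpq.symm (hnoadj _ (hb1 hq) _ (h2 hp))
  have := pred_of_reachable hpres hreach
  have : Wit w₂ ⊆ C₁ := this.mp hW₁
  exact Set.disjoint_left.mp hdisj (this hw₂) (hW₂ hw₂)
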